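/- Let P be a connected finite Γ-colored d-complete poset. Then P has a unique maximal element. If moreover P is Γ-colored minuscule, then P also has a unique minimal element. -/

import Mathlib

/-!
Common definitions: Dynkin diagram data, Γ-colored posets, and the coloring
properties EC, NA, AC, ICE2, UCB1, LCB1 from the paper, together with
Γ-colored d-complete and Γ-colored minuscule posets, top trees, slant
irreducibility, extensions, lower frontier censuses, and full heaps.
-/

universe u v w

variable {Γ : Type u} {P : Type v}

/-- The integers `θ a b` form a Dynkin diagram datum. -/
def DynkinDatum (θ : Γ → Γ → ℤ) : Prop :=
  (∀ a : Γ, θ a a = 2) ∧ (∀ a b : Γ, a ≠ b → θ a b ≤ 0) ∧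
    (∀ a b : Γ, a ≠ b → (θ a b = 0 ↔ θ b a = 0))

/-- Colors `a` and `b` are adjacent. -/
def AdjColor (θ : Γ → Γ → ℤ) (a b : Γ) : Prop := θ a b < 0

/-- The Dynkin diagram is simply laced. -/
def SimplyLaced (θ : Γ → Γ → ℤ) : Prop :=
  ∀ a b : Γ, a ≠ b → θ a b = 0 ∨ θ a b = -1

/-- All closed intervals are finite. -/
def LocallyFinitePoset (α : Type*) [PartialOrder α] : Prop :=
  ∀ x y : α, (Set.Icc x y).Finite

/-- A poset is connected if it cannot be written as a disjoint union of two nonempty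
subposets with no comparabilities between them. -/
def ConnectedPoset (α : Type*) [PartialOrder α] : Prop :=
  ∀ S : Set α, S.Nonempty → Sᶜ.Nonempty → ∃ x ∈ S, ∃ y ∈ Sᶜ, x ≤ y ∨ y ≤ x

section
variable [PartialOrder P]

/-- (EC) Elements with equal colors are comparable. -/
def ColoredEC (κ : P → Γ) : Prop := ∀ x y : P, κ x = κ y → x ≤ y ∨ y ≤ x

/-- (NA) Neighbors have adjacent colors. -/
def ColoredNA (θ : Γ → Γ → ℤ) (κ : P → Γ) : Prop :=
  ∀ x y : P, x ⋖ y → AdjColor θ (κ x) (κ y)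

/-- (AC) Elements with adjacent colors are comparable. -/
def ColoredAC (θ : Γ → Γ → ℤ) (κ : P → Γ) : Prop :=
  ∀ x y : P, AdjColor θ (κ x) (κ y) → x ≤ y ∨ y ≤ x

/-- (ICE2) Between consecutive elements of a color `a`, the census of colors
adjacent to `a` is two. -/
def ColoredICE2 (θ : Γ → Γ → ℤ) (κ : P → Γ) : Prop :=
  ∀ (a : Γ) (x y : P), κ x = a → κ y = a → x < y → (∀ z ∈ Set.Ioo x y, κ z ≠ a) →
    (∑ᶠ z ∈ Set.Ioo x y, -θ (κ z) a) = 2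

/-- `U(x,P)`: elements above `x` with color adjacent to that of `x`. -/
def USet (θ : Γ → Γ → ℤ) (κ : P → Γ) (x : P) : Set P :=
  {y : P | x < y ∧ AdjColor θ (κ y) (κ x)}

/-- `L(x,P)`: elements below `x` with color adjacent to that of `x`. -/
def LSet (θ : Γ → Γ → ℤ) (κ : P → Γ) (x : P) : Set P :=
  {y : P | y < x ∧ AdjColor θ (κ y) (κ x)}

/-- (UCB1) Upper frontier census bound. -/
def ColoredUCB1 (θ : Γ → Γ → ℤ) (κ : P → Γ) : Prop :=
  ∀ x : P, (∀ y : P, κ y = κ x → ¬x < y) →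
    (USet θ κ x).Finite ∧ (∑ᶠ y ∈ USet θ κ x, -θ (κ y) (κ x)) ≤ 1

/-- (LCB1) Lower frontier census bound. -/
def ColoredLCB1 (θ : Γ → Γ → ℤ) (κ : P → Γ) : Prop :=
  ∀ x : P, (∀ y : P, κ y = κ x → ¬y < x) →
    (LSet θ κ x).Finite ∧ (∑ᶠ y ∈ LSet θ κ x, -θ (κ y) (κ x)) ≤ 1

/-- A Γ-colored d-complete poset: locally finite, surjectively colored, and
satisfying EC, NA, AC, ICE2, and UCB1. -/
def GColoredDComplete (θ : Γ → Γ → ℤ) (κ : P → Γ) : Prop :=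
  LocallyFinitePoset P ∧ Function.Surjective κ ∧ ColoredEC κ ∧ ColoredNA θ κ ∧
    ColoredAC θ κ ∧ ColoredICE2 θ κ ∧ ColoredUCB1 θ κ

/-- A Γ-colored minuscule poset: Γ-colored d-complete and LCB1. -/
def GColoredMinuscule (θ : Γ → Γ → ℤ) (κ : P → Γ) : Prop :=
  GColoredDComplete θ κ ∧ ColoredLCB1 θ κ

/-- The top tree: the set of elements maximal in their color class. -/
def TopTree (κ : P → Γ) : Set P := {x : P | ∀ y : P, κ y = κ x → ¬x < y}

/-- `x` is covered by `y` within the subposet `S`. -/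
def CoversIn (S : Set P) (x y : P) : Prop :=
  x ∈ S ∧ y ∈ S ∧ x < y ∧ ∀ z ∈ S, x < z → ¬z < y

/-- Slant irreducibility of a Γ-colored d-complete poset. -/
def SlantIrreducible (κ : P → Γ) : Prop :=
  ConnectedPoset P ∧ ∀ x y : P, CoversIn (TopTree κ) x y → ∃ z : P, z ≠ y ∧ κ z = κ y

/-- A saturated chain in a subposet `S`: a chain that is convex in `S`. -/
def SaturatedChainIn (S C : Set P) : Prop :=
  C ⊆ S ∧ IsChain (· ≤ ·) C ∧ ∀ x ∈ C, ∀ y ∈ C, ∀ z ∈ S, x < z → z < y → z ∈ C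

/-- The lower frontier census at the element `y`. -/
noncomputable def LCensus (θ : Γ → Γ → ℤ) (κ : P → Γ) (y : P) : ℤ :=
  ∑ᶠ x ∈ LSet θ κ y, -θ (κ x) (κ y)

/-- A full heap: locally finite, surjectively colored, EC, NA, AC, ICE2, and every
color class order-isomorphic to ℤ. -/
def FullHeap (θ : Γ → Γ → ℤ) (κ : P → Γ) : Prop :=
  LocallyFinitePoset P ∧ Function.Surjective κ ∧ ColoredEC κ ∧ ColoredNA θ κ ∧
    ColoredAC θ κ ∧ ColoredICE2 θ κ ∧ ∀ a : Γ, Nonempty ({x : P // κ x = a} ≃o ℤ)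

end

/-- `ι` realizes the colored poset `A` as an order filter of the colored poset `B`. -/
def FilterEmbedding {G : Type*} {A B : Type*} [PartialOrder A] [PartialOrder B]
    (κ : A → G) (κ' : B → G) (ι : A → B) : Prop :=
  (∀ p q : A, ι p ≤ ι q ↔ p ≤ q) ∧ (∀ p : A, κ' (ι p) = κ p) ∧ IsUpperSet (Set.range ι)

/-- `B` is an extension of `A` by the color `a`, with extending element `x`. -/
def IsExtensionBy {G : Type*} {A B : Type*} [PartialOrder A] [PartialOrder B]
    (θ : G → G → ℤ) (κ : A → G) (κ' : B → G) (a : G) (ι : A → B) (x : B) : Prop :=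
  Finite B ∧ GColoredDComplete θ κ' ∧ ConnectedPoset B ∧
    FilterEmbedding κ κ' ι ∧ (Set.range ι)ᶜ = {x} ∧ κ' x = a

section MyAux

variable {Q : Type w} [PartialOrder Q] [Fintype Q]

/-- In a finite poset, above any strict inequality there is a cover step from below. -/
private lemma my_exists_cover_le {t y : Q} (h : t < y) : ∃ s : Q, t ⋖ s ∧ s ≤ y := by
  classical
  have hfin : ({z : Q | t < z ∧ z ≤ y}).Finite := Set.toFinite _
  obtain ⟨s, hs, hmin'⟩ := Finset.exists_minimal (s := hfin.toFinset)
    ⟨y, by simp [hfin.mem_toFinset, h]⟩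
  replace hs : s ∈ hfin.toFinset := hs
  have hmin : ∀ z ∈ hfin.toFinset, ¬ z < s := fun z hz hlt => hlt.not_ge (hmin' hz hlt.le)
  rw [hfin.mem_toFinset] at hs
  refine ⟨s, ⟨hs.1, fun z hz hzs => ?_⟩, hs.2⟩
  exact hmin z (by rw [hfin.mem_toFinset]; exact ⟨hz, hzs.le.trans hs.2⟩) hzs

/-- Given `x ≤ m`, `x < y`, `¬ y ≤ m`, there is a cover pair leaving the ideal of `m`
above `x`. -/
private lemma my_lemA {m x y : Q} (hxm : x ≤ m) (hxy : x < y) (hym : ¬ y ≤ m) :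
    ∃ t s : Q, x ≤ t ∧ t ≤ m ∧ t ⋖ s ∧ ¬ s ≤ m := by
  classical
  have hfin : ({z : Q | x ≤ z ∧ z ≤ y ∧ z ≤ m}).Finite := Set.toFinite _
  obtain ⟨t, ht, hmax'⟩ := Finset.exists_maximal (s := hfin.toFinset)
    ⟨x, by simp [hfin.mem_toFinset, hxm, hxy.le]⟩
  replace ht : t ∈ hfin.toFinset := ht
  have hmax : ∀ z ∈ hfin.toFinset, ¬ t < z := fun z hz hlt => hlt.not_ge (hmax' hz hlt.le)
  rw [hfin.mem_toFinset] at ht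
  obtain ⟨hxt, hty, htm⟩ := ht
  have hty' : t < y := lt_of_le_of_ne hty (fun h => hym (h ▸ htm))
  obtain ⟨s, hcov, hsy⟩ := my_exists_cover_le hty'
  refine ⟨t, s, hxt, htm, hcov, fun hsm => ?_⟩
  exact hmax s (by rw [hfin.mem_toFinset]; exact ⟨hxt.trans hcov.1.le, hsy, hsm⟩) hcov.1

/-- Abstract form of the unique-maximal-element argument. -/
private lemma my_aux_top {G : Type u} [Nonempty Q]
    (κ : Q → G) (adj : G → G → Prop)
    (hirr : ∀ a, ¬ adj a a)
    (hsym : ∀ a b, adj a b → adj b a)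
    (hNA : ∀ x y : Q, x ⋖ y → adj (κ x) (κ y))
    (hAC : ∀ x y : Q, adj (κ x) (κ y) → x ≤ y ∨ y ≤ x)
    (hUCB : ∀ x v w : Q, (∀ y, κ y = κ x → ¬x < y) → x ⋖ v → x ⋖ w → v = w)
    (hconn : ConnectedPoset Q) :
    ∃ m : Q, ∀ x, x ≤ m := by
  classical
  obtain ⟨m, -, hm'⟩ := Finset.exists_maximal (s := (Finset.univ : Finset Q))
    ⟨Classical.arbitrary Q, Finset.mem_univ _⟩
  have hm : ∀ z ∈ (Finset.univ : Finset Q), ¬ m < z := fun z hz hlt => hlt.not_ge (hm' hz hlt.le)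
  refine ⟨m, ?_⟩
  by_contra hcon
  push_neg at hcon
  obtain ⟨y0, hy0⟩ := hcon
  -- the set of elements below m having an upper cover outside the ideal of m
  have hBadfin : ({z : Q | z ≤ m ∧ ∃ v, z ⋖ v ∧ ¬v ≤ m}).Finite := Set.toFinite _
  have hBadne : hBadfin.toFinset.Nonempty := by
    obtain ⟨x, hxS, y, hyS, hcomp⟩ := hconn {z | z ≤ m} ⟨m, le_refl m⟩ ⟨y0, hy0⟩
    have hxm : x ≤ m := hxS
    have hym : ¬y ≤ m := hyS
    have hxy : x < y := by
      rcases hcomp with h | h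
      · exact lt_of_le_of_ne h (fun he => hym (he ▸ hxm))
      · exact absurd (h.trans hxm) hym
    obtain ⟨t, s, -, htm, hcov, hsm⟩ := my_lemA hxm hxy hym
    exact ⟨t, by rw [hBadfin.mem_toFinset]; exact ⟨htm, s, hcov, hsm⟩⟩
  obtain ⟨u, hu, humax'⟩ := Finset.exists_maximal (s := hBadfin.toFinset) hBadne
  replace hu : u ∈ hBadfin.toFinset := hu
  have humax : ∀ z ∈ hBadfin.toFinset, ¬ u < z := fun z hz hlt => hlt.not_ge (humax' hz hlt.le)
  rw [hBadfin.mem_toFinset] at hu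
  obtain ⟨hum, v, hv, hvm⟩ := hu
  have hum' : u < m := lt_of_le_of_ne hum (fun he => hm v (Finset.mem_univ v) (he ▸ hv.1))
  obtain ⟨w, hw, hwm⟩ := my_exists_cover_le hum'
  have hvw : v ≠ w := fun he => hvm (he ▸ hwm)
  by_cases hx : ∀ y, κ y = κ u → ¬u < y
  · exact hvw (hUCB u v w hx hv hw)
  · push_neg at hx
    obtain ⟨y, hyc, huy⟩ := hx
    have adjuv : adj (κ u) (κ v) := hNA u v hv
    have adjuw : adj (κ u) (κ w) := hNA u w hw
    have hvne : κ v ≠ κ y := fun h => hirr (κ u) (by rw [hyc] at h; exact h ▸ adjuv)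
    have hwne : κ w ≠ κ y := fun h => hirr (κ u) (by rw [hyc] at h; exact h ▸ adjuw)
    have hvy : v < y := by
      rcases hAC v y (by rw [hyc]; exact hsym _ _ adjuv) with h | h
      · exact lt_of_le_of_ne h (fun he => hvne (he ▸ rfl))
      · have : y < v := lt_of_le_of_ne h (fun he => hvne (he ▸ rfl))
        exact absurd this (hv.2 huy)
    have hwy : w < y := by
      rcases hAC w y (by rw [hyc]; exact hsym _ _ adjuw) with h | h
      · exact lt_of_le_of_ne h (fun he => hwne (he ▸ rfl))
      · have : y < w := lt_of_le_of_ne h (fun he => hwne (he ▸ rfl))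
        exact absurd this (hw.2 huy)
    have hym : ¬y ≤ m := fun h => hvm (hvy.le.trans h)
    obtain ⟨t, s, hwt, htm, hcov, hsm⟩ := my_lemA hwm hwy hym
    have : t ∈ hBadfin.toFinset := by
      rw [hBadfin.mem_toFinset]; exact ⟨htm, s, hcov, hsm⟩
    exact humax t this (lt_of_lt_of_le (hw.1.trans_le hwt) (le_refl t))

end MyAux

/-- A finite sum over a set with two distinct elements, all terms at least 1, is ≥ 2. -/
private lemma my_two_le_finsum {Q : Type w} {S : Set Q} (hS : S.Finite) (f : Q → ℤ)
    (hf : ∀ y ∈ S, 1 ≤ f y) {v w : Q} (hv : v ∈ S) (hw : w ∈ S) (hvw : v ≠ w) :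
    2 ≤ ∑ᶠ y ∈ S, f y := by
  classical
  rw [finsum_mem_eq_finite_toFinset_sum f hS]
  have hsub : ({v, w} : Finset Q) ⊆ hS.toFinset := by
    intro z hz
    rw [Finset.mem_insert, Finset.mem_singleton] at hz
    rcases hz with h | h <;> rw [hS.mem_toFinset] <;> [exact h ▸ hv; exact h ▸ hw]
  calc (2 : ℤ) = 1 + 1 := by ring
    _ ≤ f v + f w := add_le_add (hf v hv) (hf w hw)
    _ = ∑ y ∈ ({v, w} : Finset Q), f y := (Finset.sum_pair hvw).symm
    _ ≤ ∑ y ∈ hS.toFinset, f y := Finset.sum_le_sum_of_subset_of_nonneg hsub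
        (fun i hi _ => le_trans zero_le_one (hf i (hS.mem_toFinset.mp hi)))

private lemma my_adj_symm {G : Type u} {θ : G → G → ℤ} (hθ : DynkinDatum θ)
    {a b : G} (h : θ a b < 0) : θ b a < 0 := by
  obtain ⟨h2, hle, hiff⟩ := hθ
  have hab : a ≠ b := fun he => by rw [he, h2] at h; omega
  have h1 : θ b a ≤ 0 := hle b a hab.symm
  have h3 : θ b a ≠ 0 := fun he => by
    have := (hiff b a hab.symm).mp he
    omega
  omega

/-- A connected finite Γ-colored d-complete poset has a unique maximal
element; if it is moreover Γ-colored minuscule, it also has a unique minimal element. -/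
theorem unique_max_and_min [Fintype Γ] [PartialOrder P] [Fintype P] [Nonempty P]
    (θ : Γ → Γ → ℤ) (κ : P → Γ) (hθ : DynkinDatum θ)
    (hdc : GColoredDComplete θ κ) (hconn : ConnectedPoset P) :
    (∃! m : P, ∀ x : P, ¬m < x) ∧
      (ColoredLCB1 θ κ → ∃! m : P, ∀ x : P, ¬x < m) := by
  classical
  obtain ⟨hLF, hsurj, hEC, hNA, hAC, hICE2, hUCB1⟩ := hdc
  set adj : Γ → Γ → Prop := fun a b => θ a b < 0 with hadj
  have hirr : ∀ a, ¬ adj a a := fun a h => by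
    rw [hadj] at h; rw [hθ.1 a] at h; omega
  have hsym : ∀ a b, adj a b → adj b a := fun a b h => my_adj_symm hθ h
  constructor
  · -- unique maximal element
    have hUCB : ∀ x v w : P, (∀ y, κ y = κ x → ¬x < y) → x ⋖ v → x ⋖ w → v = w := by
      intro x v w hmaxc hv hw
      by_contra hvw
      obtain ⟨hfin, hsum⟩ := hUCB1 x hmaxc
      have hvU : v ∈ USet θ κ x := ⟨hv.1, my_adj_symm hθ (hNA x v hv)⟩
      have hwU : w ∈ USet θ κ x := ⟨hw.1, my_adj_symm hθ (hNA x w hw)⟩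
      have h2 : (2 : ℤ) ≤ ∑ᶠ y ∈ USet θ κ x, -θ (κ y) (κ x) := by
        refine my_two_le_finsum hfin _ (fun y hy => ?_) hvU hwU hvw
        have := hy.2
        unfold AdjColor at this
        omega
      omega
    obtain ⟨m, hm⟩ := my_aux_top κ adj hirr hsym (fun x y h => hNA x y h)
      (fun x y h => hAC x y h) hUCB hconn
    refine ⟨m, fun x hlt => absurd (hm x) hlt.not_ge, fun m' hm' => ?_⟩
    rcases lt_or_eq_of_le (hm m') with h | h
    · exact absurd h (hm' m)
    · exact h
  · -- unique minimal element, assuming LCB1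
    intro hLCB
    have hconn' : ConnectedPoset Pᵒᵈ := by
      intro S hS hSc
      obtain ⟨a, ha⟩ := hS
      obtain ⟨b, hb⟩ := hSc
      obtain ⟨x, hx, y, hy, h⟩ := hconn {z : P | OrderDual.toDual z ∈ S}
        ⟨OrderDual.ofDual a, by simpa using ha⟩ ⟨OrderDual.ofDual b, by simpa using hb⟩
      exact ⟨OrderDual.toDual x, hx, OrderDual.toDual y, hy, h.symm⟩
    have hNA' : ∀ x y : Pᵒᵈ, x ⋖ y →
        adj (κ (OrderDual.ofDual x)) (κ (OrderDual.ofDual y)) := by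
      intro x y h
      exact hsym _ _ (hNA (OrderDual.ofDual y) (OrderDual.ofDual x) h.ofDual)
    have hAC' : ∀ x y : Pᵒᵈ, adj (κ (OrderDual.ofDual x)) (κ (OrderDual.ofDual y)) →
        x ≤ y ∨ y ≤ x := by
      intro x y h
      exact (hAC (OrderDual.ofDual x) (OrderDual.ofDual y) h).symm
    have hUCB' : ∀ x v w : Pᵒᵈ,
        (∀ y : Pᵒᵈ, κ (OrderDual.ofDual y) = κ (OrderDual.ofDual x) → ¬x < y) →
        x ⋖ v → x ⋖ w → v = w := by
      intro x v w hminc hv hw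
      by_contra hvw
      have hminc' : ∀ y : P, κ y = κ (OrderDual.ofDual x) → ¬y < OrderDual.ofDual x :=
        fun y hy hlt => hminc (OrderDual.toDual y) hy hlt
      obtain ⟨hfin, hsum⟩ := hLCB (OrderDual.ofDual x) hminc'
      have hvL : OrderDual.ofDual v ∈ LSet θ κ (OrderDual.ofDual x) :=
        ⟨hv.ofDual.1, hNA (OrderDual.ofDual v) (OrderDual.ofDual x) hv.ofDual⟩
      have hwL : OrderDual.ofDual w ∈ LSet θ κ (OrderDual.ofDual x) :=
        ⟨hw.ofDual.1, hNA (OrderDual.ofDual w) (OrderDual.ofDual x) hw.ofDual⟩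
      have h2 : (2 : ℤ) ≤ ∑ᶠ y ∈ LSet θ κ (OrderDual.ofDual x),
          -θ (κ y) (κ (OrderDual.ofDual x)) := by
        refine my_two_le_finsum hfin _ (fun y hy => ?_) hvL hwL
          (fun he => hvw (OrderDual.ofDual.injective he))
        have := hy.2
        unfold AdjColor at this
        omega
      omega
    obtain ⟨m, hm⟩ := my_aux_top (Q := Pᵒᵈ) (fun x => κ (OrderDual.ofDual x)) adj
      hirr hsym hNA' hAC' hUCB' hconn'
    refine ⟨OrderDual.ofDual m, fun x hlt => absurd (hm (OrderDual.toDual x))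
      (LT.lt.not_ge hlt), fun m' hm' => ?_⟩
    rcases lt_or_eq_of_le (hm (OrderDual.toDual m')) with h | h
    · exact absurd h (hm' (OrderDual.ofDual m))
    · exact congrArg OrderDual.ofDual h
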